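/- Let R be a commutative ring, n a natural number, P a polynomial over R with natDegree P ≤ n, k : Fin n → R, and x ∈ R. Then ∑_{S ⊆ Fin n} (−1)^{n−|S|} · P.eval(x + ∑_{i∈S} k(i)) = n! · (coeff P n) · ∏ᵢ k(i), where the sum is over all subsets S of Fin n and n! is interpreted in R. -/
import Mathlib

open Polynomial Finset

private lemma taylor_coeff_of_natDegree_le {R : Type*} [CommRing R] {P : R[X]} {m : ℕ}
    (h : P.natDegree ≤ m) (r : R) : (Polynomial.taylor r P).coeff m = P.coeff m := by
  rw [Polynomial.taylor_coeff]
  have hd : (P.hasseDeriv m).natDegree ≤ 0 := le_trans (P.natDegree_hasseDeriv_le m) (by omega)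
  rw [Polynomial.eq_C_of_natDegree_le_zero hd, eval_C, Polynomial.hasseDeriv_coeff,
    Nat.zero_add, Nat.choose_self, Nat.cast_one, one_mul]

private lemma diff_natDegree_le {R : Type*} [CommRing R] {P : R[X]} {n : ℕ}
    (h : P.natDegree ≤ n + 1) (r : R) : (Polynomial.taylor r P - P).natDegree ≤ n := by
  rw [Polynomial.natDegree_le_iff_coeff_eq_zero]
  intro m hm
  rw [Polynomial.coeff_sub, taylor_coeff_of_natDegree_le (le_trans h hm) r, sub_self]

private lemma diff_coeff {R : Type*} [CommRing R] {P : R[X]} {n : ℕ}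
    (h : P.natDegree ≤ n + 1) (r : R) :
    (Polynomial.taylor r P - P).coeff n = (n + 1 : ℕ) * P.coeff (n + 1) * r := by
  rw [Polynomial.coeff_sub, Polynomial.taylor_coeff]
  have hd : (P.hasseDeriv n).natDegree < 2 :=
    lt_of_le_of_lt (P.natDegree_hasseDeriv_le n) (by omega)
  rw [Polynomial.eval_eq_sum_range' hd]
  have h1 : (1 + n).choose n = n + 1 := by rw [Nat.add_comm]; exact Nat.choose_succ_self_right n
  simp [Finset.sum_range_succ, Polynomial.hasseDeriv_coeff, h1, Nat.add_comm 1 n]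

private lemma powerset_map' {α β : Type*} (s : Finset α) (f : α ↪ β) :
    (s.map f).powerset = s.powerset.map ⟨Finset.map f, Finset.map_injective f⟩ := by
  ext t
  simp only [Finset.mem_powerset, Finset.mem_map, Finset.subset_map_iff,
    Function.Embedding.coeFn_mk]
  constructor
  · rintro ⟨u, hu, rfl⟩; exact ⟨u, hu, rfl⟩
  · rintro ⟨u, hu, rfl⟩; exact ⟨u, hu, rfl⟩

private lemma sum_finset_fin_succ {M : Type*} [AddCommMonoid M] {n : ℕ}
    (f : Finset (Fin (n + 1)) → M) :
    ∑ S : Finset (Fin (n + 1)), f S =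
      ∑ T : Finset (Fin n),
        (f (T.map Fin.castSuccEmb) + f (insert (Fin.last n) (T.map Fin.castSuccEmb))) := by
  have hlast : Fin.last n ∉ Finset.univ.map Fin.castSuccEmb := by
    simp [Fin.castSuccEmb]
    intro i h
    exact absurd h (Fin.castSucc_lt_last i).ne
  rw [← Finset.powerset_univ, Fin.univ_castSuccEmb, Finset.cons_eq_insert,
    Finset.sum_powerset_insert hlast, powerset_map', Finset.sum_map, Finset.sum_map,
    Finset.powerset_univ, ← Finset.sum_add_distrib]
  rfl

theorem finite_difference_polynomial {R : Type*} [CommRing R] (n : ℕ)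
    (P : Polynomial R) (hP : P.natDegree ≤ n) (k : Fin n → R) (x : R) :
    ∑ S : Finset (Fin n), (-1 : R) ^ (n - S.card) * P.eval (x + ∑ i ∈ S, k i) =
      (n.factorial : R) * P.coeff n * ∏ i, k i := by
  induction n generalizing P with
  | zero =>
    rw [Polynomial.eq_C_of_natDegree_le_zero hP]
    simp
  | succ n ih =>
    rw [sum_finset_fin_succ]
    have key : ∀ T : Finset (Fin n),
        (-1 : R) ^ (n + 1 - (T.map Fin.castSuccEmb).card) *
            P.eval (x + ∑ i ∈ T.map Fin.castSuccEmb, k i) +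
          (-1 : R) ^ (n + 1 - (insert (Fin.last n) (T.map Fin.castSuccEmb)).card) *
            P.eval (x + ∑ i ∈ insert (Fin.last n) (T.map Fin.castSuccEmb), k i) =
        (-1 : R) ^ (n - T.card) *
          (Polynomial.taylor (k (Fin.last n)) P - P).eval
            (x + ∑ i ∈ T, k i.castSucc) := by
      intro T
      have hlastT : Fin.last n ∉ T.map Fin.castSuccEmb := by
        simp [Fin.castSuccEmb]
        intro i _ h
        exact absurd h (Fin.castSucc_lt_last i).ne
      have hcard : T.card ≤ n := le_trans (Finset.card_le_univ T) (by simp)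
      rw [Finset.card_insert_of_notMem hlastT, Finset.sum_insert hlastT, Finset.card_map,
        Finset.sum_map]
      have h1 : n + 1 - T.card = (n - T.card) + 1 := by omega
      have h2 : n + 1 - (T.card + 1) = n - T.card := by omega
      have hsum : ∑ i ∈ T, k (Fin.castSuccEmb i) = ∑ i ∈ T, k i.castSucc := rfl
      rw [hsum, h1, h2, Polynomial.eval_sub, Polynomial.taylor_eval]
      have h3 : x + (k (Fin.last n) + ∑ i ∈ T, k i.castSucc) =
          x + ∑ i ∈ T, k i.castSucc + k (Fin.last n) := by ring
      rw [h3]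
      ring
    rw [Finset.sum_congr rfl (fun T _ => key T),
      ih _ (diff_natDegree_le hP (k (Fin.last n))) (fun i => k i.castSucc),
      diff_coeff hP (k (Fin.last n)), Fin.prod_univ_castSucc, Nat.factorial_succ]
    push_cast
    ring
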